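/- arXiv:2601.08494 — 8 statements merged into one kernel-verified Lean document; each statement's English description precedes it below -/
import Mathlib

section
/- (Proposition 1(2), strict decrease.) Assume the problem is feasible with attained optimal value t⋆, i.e. there is a feasible pair (x⋆,s⋆) with f x⋆ = t⋆ and t⋆ ≤ f x for every feasible pair (x,s). Assume also that for every t ∈ ℝ the infimum defining r⋆(t) is attained by some pair (x,s). Then r⋆ is strictly decreasing on (−∞, t⋆]: for all t₁ < t₂ ≤ t⋆, r⋆(t₂) < r⋆(t₁). -/
set_option maxHeartbeats 1600000 in
/-- Proposition 1(2), strict decrease of `r⋆` on `(−∞, t⋆]`. -/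
theorem stmt_3
    (n m : ℕ)
    (f : EuclideanSpace ℝ (Fin n) → ℝ) (hf : ConvexOn ℝ Set.univ f)
    (C : Set (EuclideanSpace ℝ (Fin m))) (hCne : C.Nonempty) (hCcl : IsClosed C)
    (hCcx : Convex ℝ C)
    (A : EuclideanSpace ℝ (Fin n) →ₗ[ℝ] EuclideanSpace ℝ (Fin m))
    (b : EuclideanSpace ℝ (Fin m))
    (r : EuclideanSpace ℝ (Fin n) → EuclideanSpace ℝ (Fin m) → ℝ → ℝ)
    (hr : ∀ x s t, r x s t =
      (1/2) * (max (f x - t) 0)^2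
      + ((1/2) * ‖A x + s - b‖^2 + (1/2) * (Metric.infDist s C)^2))
    (rstar : ℝ → ℝ)
    (hrstar : ∀ t, rstar t =
      ⨅ p : EuclideanSpace ℝ (Fin n) × EuclideanSpace ℝ (Fin m), r p.1 p.2 t)
    (tstar : ℝ)
    (xstar : EuclideanSpace ℝ (Fin n)) (sstar : EuclideanSpace ℝ (Fin m))
    (hfeas : A xstar + sstar = b ∧ sstar ∈ C)
    (hval : f xstar = tstar)
    (hopt : ∀ (x : EuclideanSpace ℝ (Fin n)) (s : EuclideanSpace ℝ (Fin m)),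
      A x + s = b → s ∈ C → tstar ≤ f x)
    (hatt : ∀ t : ℝ, ∃ (x : EuclideanSpace ℝ (Fin n)) (s : EuclideanSpace ℝ (Fin m)),
      ∀ (x' : EuclideanSpace ℝ (Fin n)) (s' : EuclideanSpace ℝ (Fin m)),
        r x s t ≤ r x' s' t) :
    ∀ t₁ t₂ : ℝ, t₁ < t₂ → t₂ ≤ tstar → rstar t₂ < rstar t₁ := by
  intro t₁ t₂ ht12 ht2
  obtain ⟨x₁, s₁, hmin⟩ := hatt t₁
  have hbdd : ∀ t : ℝ, BddBelow (Set.range fun p :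
      EuclideanSpace ℝ (Fin n) × EuclideanSpace ℝ (Fin m) => r p.1 p.2 t) := by
    intro t
    refine ⟨0, ?_⟩
    rintro _ ⟨p, rfl⟩
    simp only [hr]
    positivity
  have h1 : rstar t₁ = r x₁ s₁ t₁ := by
    rw [hrstar]
    apply le_antisymm
    · exact ciInf_le (hbdd t₁) (x₁, s₁)
    · exact le_ciInf fun p => hmin p.1 p.2
  have h2 : rstar t₂ ≤ r x₁ s₁ t₂ := by
    rw [hrstar]
    exact ciInf_le (hbdd t₂) (x₁, s₁)
  by_cases hcase : t₁ < f x₁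
  · have hlt : r x₁ s₁ t₂ < r x₁ s₁ t₁ := by
      rw [hr, hr]
      have h0 : max (f x₁ - t₂) 0 < max (f x₁ - t₁) 0 := by
        rw [max_eq_left (by linarith : (0:ℝ) ≤ f x₁ - t₁)]
        rcases le_or_gt (f x₁ - t₂) 0 with h | h
        · rw [max_eq_right h]; linarith
        · rw [max_eq_left h.le]; linarith
      have hnn : 0 ≤ max (f x₁ - t₂) 0 := le_max_right _ _
      nlinarith
    rw [h1]
    linarith
  · exfalso
    push_neg at hcase
    obtain ⟨hAb, hsC⟩ := hfeas
    set v := A x₁ + s₁ - b with hv_def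
    set d := Metric.infDist s₁ C with hd_def
    have hd0 : 0 ≤ d := Metric.infDist_nonneg
    set r₀ : ℝ := (1/2) * ‖v‖^2 + (1/2) * d^2 with hr₀_def
    clear_value v d r₀
    have hr₀0 : 0 ≤ r₀ := by rw [hr₀_def]; positivity
    have htstar : f x₁ < tstar := by linarith
    rcases eq_or_lt_of_le hr₀0 with heq | hpos
    · -- r₀ = 0 : (x₁,s₁) feasible, contradiction
      have hv2 : ‖v‖^2 = 0 := le_antisymm (by nlinarith [sq_nonneg d]) (sq_nonneg _)
      have hd2 : d^2 = 0 := le_antisymm (by nlinarith [sq_nonneg ‖v‖]) (sq_nonneg _)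
      have hv : ‖v‖ = 0 := pow_eq_zero_iff (two_ne_zero) |>.mp hv2
      have hd : d = 0 := pow_eq_zero_iff (two_ne_zero) |>.mp hd2
      have hveq : v = 0 := norm_eq_zero.mp hv
      rw [hv_def] at hveq
      have hfeas1 : A x₁ + s₁ = b := sub_eq_zero.mp hveq
      rw [hd_def] at hd
      have hs₁ : s₁ ∈ C := (hCcl.mem_iff_infDist_zero hCne).mpr hd
      have := hopt x₁ s₁ hfeas1 hs₁
      linarith
    · -- r₀ > 0 : build a strictly better point
      set M : ℝ := tstar - f x₁ with hM_def
      have hM : 0 < M := by simp [hM_def]; linarith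
      set l : ℝ := min (r₀ / M^2) (1/2) with hl_def
      have hl0 : 0 < l := lt_min (by positivity) (by norm_num)
      have hl1 : l ≤ 1/2 := min_le_right _ _
      have hlM : l * M^2 ≤ r₀ := by
        have := min_le_left (r₀ / M^2) (1/2)
        calc l * M^2 ≤ (r₀ / M^2) * M^2 := by
              apply mul_le_mul_of_nonneg_right this (by positivity)
          _ = r₀ := by field_simp
      clear_value M l
      set x' : EuclideanSpace ℝ (Fin n) := (1-l) • x₁ + l • xstar with hx'_def
      set s' : EuclideanSpace ℝ (Fin m) := (1-l) • s₁ + l • sstar with hs'_def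
      clear_value x' s'
      have hAxs : A xstar = b - sstar := eq_sub_of_add_eq hAb
      have ha : A x' + s' - b = (1-l) • v := by
        rw [hx'_def, hs'_def, map_add, map_smul, map_smul, hAxs, hv_def]
        module
      have hnorm : ‖A x' + s' - b‖ = (1-l) * ‖v‖ := by
        rw [ha, norm_smul, Real.norm_eq_abs, abs_of_nonneg (by linarith)]
      have hinf : Metric.infDist s' C ≤ (1-l) * d := by
        have h1l : (0:ℝ) < 1 - l := by linarith
        have key : Metric.infDist s' C / (1-l) ≤ d := by
          rw [hd_def]
          conv_rhs => rw [Metric.infDist_eq_iInf]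
          haveI := hCne.to_subtype
          apply le_ciInf
          intro c
          rw [div_le_iff₀' h1l]
          have hmem : (1-l) • (c:EuclideanSpace ℝ (Fin m)) + l • sstar ∈ C :=
            hCcx c.2 hsC (by linarith) hl0.le (by ring)
          calc Metric.infDist s' C ≤ dist s' ((1-l) • (c:EuclideanSpace ℝ (Fin m)) + l • sstar) :=
                Metric.infDist_le_dist_of_mem hmem
            _ = ‖s' - ((1-l) • (c:EuclideanSpace ℝ (Fin m)) + l • sstar)‖ := by rw [dist_eq_norm]
            _ = ‖(1-l) • (s₁ - (c:EuclideanSpace ℝ (Fin m)))‖ := by rw [hs'_def]; congr 1; module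
            _ = (1-l) * ‖s₁ - (c:EuclideanSpace ℝ (Fin m))‖ := by
                rw [norm_smul, Real.norm_eq_abs, abs_of_nonneg (by linarith)]
            _ = (1-l) * dist s₁ (c:EuclideanSpace ℝ (Fin m)) := by rw [dist_eq_norm]
        have h' := (div_le_iff₀ h1l).mp key
        nlinarith [h']
      have hfx' : f x' ≤ (1-l) * f x₁ + l * tstar := by
        have := hf.2 (Set.mem_univ x₁) (Set.mem_univ xstar)
          (by linarith : (0:ℝ) ≤ 1 - l) hl0.le (by ring)
        rw [hval, ← hx'_def] at this
        simpa [smul_eq_mul] using this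
      have hpen : max (f x' - t₁) 0 ≤ l * M := by
        apply max_le
        · rw [hM_def]; nlinarith
        · positivity
      have hrx1 : r x₁ s₁ t₁ = r₀ := by
        rw [hr, max_eq_right (by linarith : f x₁ - t₁ ≤ 0)]
        rw [hr₀_def, hv_def, hd_def]
        ring
      have hlt : r x' s' t₁ < r x₁ s₁ t₁ := by
        rw [hrx1, hr, hnorm]
        have hinf0 : 0 ≤ Metric.infDist s' C := Metric.infDist_nonneg
        have hpen0 : 0 ≤ max (f x' - t₁) 0 := le_max_right _ _
        have hsq1 : (max (f x' - t₁) 0)^2 ≤ (l*M)^2 := by nlinarith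
        have hsq2 : (Metric.infDist s' C)^2 ≤ ((1-l)*d)^2 := by nlinarith
        have e2 : 1/2*((1-l)*‖v‖)^2 + 1/2*(Metric.infDist s' C)^2 ≤ (1-l)^2 * r₀ := by
          rw [hr₀_def]; nlinarith [sq_nonneg ‖v‖]
        have e3 : (1-l)^2 * r₀ ≤ (1-l) * r₀ := by
          nlinarith [mul_nonneg (mul_nonneg (by linarith : (0:ℝ) ≤ 1-l) hl0.le) hpos.le]
        have e4 : 1/2*(l*M)^2 < l * r₀ := by
          nlinarith [mul_le_mul_of_nonneg_left hlM hl0.le, mul_pos hl0 hpos,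
            mul_pos (mul_pos hl0 hl0) (pow_pos hM 2)]
        nlinarith [hsq1, e2, e3, e4]
      exact absurd (hmin x' s') (not_le.mpr hlt)
end

section
/- (Proposition 1(3), limiting value.) Let M := ⨅ (x,s), r₀(x,s) (a real infimum, well defined since r₀ is nonnegative). Then r⋆(t) ≥ M for every t ∈ ℝ, and r⋆(t) tends to M as t → +∞ (Filter.Tendsto r⋆ Filter.atTop (nhds M)). -/
/-- Proposition 1(3), limiting value: `r⋆(t) ≥ M` and `r⋆(t) → M` as `t → +∞`,
where `M` is the infimum of `r₀`. -/
theorem stmt_4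
    (n m : ℕ)
    (f : EuclideanSpace ℝ (Fin n) → ℝ) (hf : ConvexOn ℝ Set.univ f)
    (C : Set (EuclideanSpace ℝ (Fin m))) (hCne : C.Nonempty) (hCcl : IsClosed C)
    (hCcx : Convex ℝ C)
    (A : EuclideanSpace ℝ (Fin n) →ₗ[ℝ] EuclideanSpace ℝ (Fin m))
    (b : EuclideanSpace ℝ (Fin m))
    (r : EuclideanSpace ℝ (Fin n) → EuclideanSpace ℝ (Fin m) → ℝ → ℝ)
    (hr : ∀ x s t, r x s t =
      (1/2) * (max (f x - t) 0)^2
      + ((1/2) * ‖A x + s - b‖^2 + (1/2) * (Metric.infDist s C)^2))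
    (rstar : ℝ → ℝ)
    (hrstar : ∀ t, rstar t =
      ⨅ p : EuclideanSpace ℝ (Fin n) × EuclideanSpace ℝ (Fin m), r p.1 p.2 t)
    (M : ℝ)
    (hM : M = ⨅ p : EuclideanSpace ℝ (Fin n) × EuclideanSpace ℝ (Fin m),
      ((1/2) * ‖A p.1 + p.2 - b‖^2 + (1/2) * (Metric.infDist p.2 C)^2)) :
    (∀ t : ℝ, rstar t ≥ M) ∧
    Filter.Tendsto rstar Filter.atTop (nhds M) := by
  set g : EuclideanSpace ℝ (Fin n) × EuclideanSpace ℝ (Fin m) → ℝ :=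
    fun p => (1/2) * ‖A p.1 + p.2 - b‖^2 + (1/2) * (Metric.infDist p.2 C)^2 with hg
  have hg0 : ∀ p, 0 ≤ g p := by
    intro p
    have h1 : (0:ℝ) ≤ (1/2) * ‖A p.1 + p.2 - b‖^2 := by positivity
    have h2 : (0:ℝ) ≤ (1/2) * (Metric.infDist p.2 C)^2 := by positivity
    simpa [hg] using add_nonneg h1 h2
  have hgbdd : BddBelow (Set.range g) := ⟨0, by rintro _ ⟨p, rfl⟩; exact hg0 p⟩
  have hrge : ∀ t p, g p ≤ r p.1 p.2 t := by
    intro t p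
    rw [hr]
    have h0 : (0:ℝ) ≤ (1/2) * (max (f p.1 - t) 0)^2 := by positivity
    simp only [hg]
    linarith
  have hr0 : ∀ (t : ℝ) (p : EuclideanSpace ℝ (Fin n) × EuclideanSpace ℝ (Fin m)),
      0 ≤ r p.1 p.2 t := fun t p => le_trans (hg0 p) (hrge t p)
  have hrbdd : ∀ t : ℝ, BddBelow (Set.range fun p : EuclideanSpace ℝ (Fin n) × EuclideanSpace ℝ (Fin m) => r p.1 p.2 t) :=
    fun t => ⟨0, by rintro _ ⟨p, rfl⟩; exact hr0 t p⟩
  have hlower : ∀ t, M ≤ rstar t := by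
    intro t
    rw [hrstar, hM]
    exact le_ciInf fun p => le_trans (ciInf_le hgbdd p) (hrge t p)
  refine ⟨hlower, ?_⟩
  rw [Metric.tendsto_atTop]
  intro ε hε
  have hlt : M < M + ε / 2 := by linarith
  rw [hM] at hlt
  obtain ⟨p, hp⟩ := exists_lt_of_ciInf_lt hlt
  refine ⟨f p.1, fun t ht => ?_⟩
  have hupper : rstar t ≤ g p := by
    rw [hrstar]
    refine le_trans (ciInf_le (hrbdd t) p) ?_
    rw [hr]
    have hmax : max (f p.1 - t) 0 = 0 := max_eq_right (by linarith)
    simp [hmax, hg]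
  have hl := hlower t
  rw [Real.dist_eq, abs_lt]
  rw [← hM] at hp
  have h3 : rstar t < M + ε / 2 := lt_of_le_of_lt hupper hp
  constructor <;> linarith
end

section
/- (Proposition 1(3), flat region.) Suppose (x̄,s̄) minimizes r₀, i.e. r₀(x̄,s̄) ≤ r₀(x,s) for all (x,s), and set M := r₀(x̄,s̄). Then for every t ≥ f x̄ one has r⋆(t) = M. -/
/-- Proposition 1(3), flat region: if `(x̄,s̄)` minimises `r₀` with value `M`,
then `r⋆(t) = M` for every `t ≥ f x̄`. -/
theorem stmt_5
    (n m : ℕ)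
    (f : EuclideanSpace ℝ (Fin n) → ℝ) (hf : ConvexOn ℝ Set.univ f)
    (C : Set (EuclideanSpace ℝ (Fin m))) (hCne : C.Nonempty) (hCcl : IsClosed C)
    (hCcx : Convex ℝ C)
    (A : EuclideanSpace ℝ (Fin n) →ₗ[ℝ] EuclideanSpace ℝ (Fin m))
    (b : EuclideanSpace ℝ (Fin m))
    (r : EuclideanSpace ℝ (Fin n) → EuclideanSpace ℝ (Fin m) → ℝ → ℝ)
    (hr : ∀ x s t, r x s t =
      (1/2) * (max (f x - t) 0)^2
      + ((1/2) * ‖A x + s - b‖^2 + (1/2) * (Metric.infDist s C)^2))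
    (rstar : ℝ → ℝ)
    (hrstar : ∀ t, rstar t =
      ⨅ p : EuclideanSpace ℝ (Fin n) × EuclideanSpace ℝ (Fin m), r p.1 p.2 t)
    (r₀ : EuclideanSpace ℝ (Fin n) → EuclideanSpace ℝ (Fin m) → ℝ)
    (hr₀ : ∀ x s, r₀ x s =
      (1/2) * ‖A x + s - b‖^2 + (1/2) * (Metric.infDist s C)^2)
    (xbar : EuclideanSpace ℝ (Fin n)) (sbar : EuclideanSpace ℝ (Fin m))
    (hmin : ∀ (x : EuclideanSpace ℝ (Fin n)) (s : EuclideanSpace ℝ (Fin m)),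
      r₀ xbar sbar ≤ r₀ x s)
    (M : ℝ) (hM : M = r₀ xbar sbar) :
    ∀ t : ℝ, f xbar ≤ t → rstar t = M := by
  intro t ht
  have hlb : ∀ p : EuclideanSpace ℝ (Fin n) × EuclideanSpace ℝ (Fin m),
      M ≤ r p.1 p.2 t := by
    intro p
    rw [hr, hM, hr₀]
    have := hmin p.1 p.2
    rw [hr₀ p.1 p.2, hr₀ xbar sbar] at this
    nlinarith [sq_nonneg (max (f p.1 - t) 0)]
  rw [hrstar]
  refine le_antisymm ?_ (le_ciInf hlb)
  have hval : r xbar sbar t = M := by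
    rw [hr, hM, hr₀, max_eq_right (by linarith)]
    ring
  calc (⨅ p : EuclideanSpace ℝ (Fin n) × EuclideanSpace ℝ (Fin m), r p.1 p.2 t)
      ≤ r xbar sbar t := ciInf_le ⟨M, fun y hy => by obtain ⟨p, rfl⟩ := hy; exact hlb p⟩ (xbar, sbar)
    _ = M := hval
end

section
/- (Lemma 2(1), monotonicity of exact proximal iterates.) Let g : ℝ → ℝ be convex, nonnegative and monotone nonincreasing, and suppose there is t⋆ ∈ ℝ such that g(t) = 0 for all t ≥ t⋆ and g is strictly decreasing on (−∞, t⋆] (for all t₁ < t₂ ≤ t⋆, g(t₂) < g(t₁)); this is the structure of the value function r⋆ when the problem is feasible with attained optimal value t⋆. Let σ : ℕ → ℝ with σ k > 0 for all k, and let (t̂ k) be a sequence with t̂ 0 ≤ t⋆ such that for each k, t̂ (k+1) is a minimizer over ℝ of t ↦ g(t) + (t − t̂ k)²/(2·σ k). Then the sequence (t̂ k) is monotone nondecreasing and t̂ k ≤ t⋆ for every k. -/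
/-- Lemma 2(1): monotonicity of exact proximal iterates on the value function. -/
theorem stmt_8
    (g : ℝ → ℝ) (hgcvx : ConvexOn ℝ Set.univ g) (hgnn : ∀ t, 0 ≤ g t)
    (hgmono : ∀ t₁ t₂ : ℝ, t₁ ≤ t₂ → g t₂ ≤ g t₁)
    (tstar : ℝ)
    (hflat : ∀ t : ℝ, tstar ≤ t → g t = 0)
    (hstrict : ∀ t₁ t₂ : ℝ, t₁ < t₂ → t₂ ≤ tstar → g t₂ < g t₁)
    (σ : ℕ → ℝ) (hσ : ∀ k, 0 < σ k)
    (that : ℕ → ℝ) (h0 : that 0 ≤ tstar)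
    (hprox : ∀ k : ℕ, ∀ t : ℝ,
      g (that (k+1)) + (that (k+1) - that k)^2 / (2 * σ k)
        ≤ g t + (t - that k)^2 / (2 * σ k)) :
    Monotone that ∧ ∀ k : ℕ, that k ≤ tstar := by
  have key : ∀ k : ℕ, that k ≤ tstar → that k ≤ that (k+1) ∧ that (k+1) ≤ tstar := by
    intro k hk
    have hσk := hσ k
    have h2σ : (0:ℝ) < 2 * σ k := by linarith
    constructor
    · by_contra h
      push_neg at h
      have h1 := hprox k (that k)
      have hg : g (that k) ≤ g (that (k+1)) := hgmono _ _ h.le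
      have hne : that (k+1) - that k ≠ 0 := sub_ne_zero.mpr h.ne
      have hsq : 0 < (that (k+1) - that k)^2 := by positivity
      have hpos : 0 < (that (k+1) - that k)^2 / (2 * σ k) := div_pos hsq h2σ
      simp only [sub_self] at h1
      norm_num at h1
      linarith
    · by_contra h
      push_neg at h
      have h1 := hprox k tstar
      have hg1 : g (that (k+1)) = 0 := hflat _ h.le
      have hg2 : g tstar = 0 := hflat _ le_rfl
      have hsq : (tstar - that k)^2 < (that (k+1) - that k)^2 := by nlinarith
      have hle2 : (that (k+1) - that k)^2 / (2 * σ k) ≤ (tstar - that k)^2 / (2 * σ k) := by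
        linarith
      have := (div_le_div_iff_of_pos_right h2σ).mp hle2
      linarith
  have hle : ∀ k, that k ≤ tstar := by
    intro k
    induction k with
    | zero => exact h0
    | succ n ih => exact (key n ih).2
  refine ⟨monotone_nat_of_le_succ fun k => (key k (hle k)).1, hle⟩
end

section
/- (Lemma 2(2), exact convergence.) Let g : ℝ → ℝ be convex, nonnegative and monotone nonincreasing, and suppose there is t⋆ ∈ ℝ such that g(t) = 0 for all t ≥ t⋆ and g is strictly decreasing on (−∞, t⋆] (for all t₁ < t₂ ≤ t⋆, g(t₂) < g(t₁)). Let σ : ℕ → ℝ be bounded away from zero (there is σ̲ > 0 with σ k ≥ σ̲ for all k), and let (t̂ k) be a sequence with t̂ 0 ≤ t⋆ such that for each k, t̂ (k+1) is a minimizer over ℝ of t ↦ g(t) + (t − t̂ k)²/(2·σ k). Then t̂ k converges to t⋆ as k → ∞ (and in fact increases monotonically to t⋆). -/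
set_option maxHeartbeats 1000000 in
/-- Lemma 2(2): exact convergence of the proximal iterates, `t̂ k ↑ t⋆`. -/
theorem stmt_9
    (g : ℝ → ℝ) (hgcvx : ConvexOn ℝ Set.univ g) (hgnn : ∀ t, 0 ≤ g t)
    (hgmono : ∀ t₁ t₂ : ℝ, t₁ ≤ t₂ → g t₂ ≤ g t₁)
    (tstar : ℝ)
    (hflat : ∀ t : ℝ, tstar ≤ t → g t = 0)
    (hstrict : ∀ t₁ t₂ : ℝ, t₁ < t₂ → t₂ ≤ tstar → g t₂ < g t₁)
    (σ : ℕ → ℝ) (σlow : ℝ) (hσlow : 0 < σlow) (hσ : ∀ k, σlow ≤ σ k)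
    (that : ℕ → ℝ) (h0 : that 0 ≤ tstar)
    (hprox : ∀ k : ℕ, ∀ t : ℝ,
      g (that (k+1)) + (that (k+1) - that k)^2 / (2 * σ k)
        ≤ g t + (t - that k)^2 / (2 * σ k)) :
    Filter.Tendsto that Filter.atTop (nhds tstar) ∧ Monotone that := by
  have hσpos : ∀ k, 0 < σ k := fun k => lt_of_lt_of_le hσlow (hσ k)
  -- monotonicity of one step
  have hmono : ∀ k, that k ≤ that (k+1) := by
    intro k
    by_contra hcon
    push_neg at hcon
    have h1 := hprox k (that k)
    have h2 := hgmono _ _ hcon.le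
    have hσk := hσpos k
    have h2σ : (0:ℝ) < 2 * σ k := by linarith
    have hq0 : (that k - that k)^2 / (2 * σ k) = 0 := by simp
    rw [hq0] at h1
    have hle0 : (that (k+1) - that k)^2 / (2 * σ k) ≤ 0 := by linarith
    have hge0 : (0:ℝ) ≤ (that (k+1) - that k)^2 / (2 * σ k) :=
      div_nonneg (sq_nonneg _) h2σ.le
    have heq : (that (k+1) - that k)^2 / (2 * σ k) = 0 := le_antisymm hle0 hge0
    have h3 : (that (k+1) - that k)^2 = 0 := by
      have h2σ' : (2 * σ k) ≠ 0 := by positivity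
      field_simp [h2σ'] at heq
      nlinarith [heq]
    have : that (k+1) - that k = 0 := by
      exact pow_eq_zero_iff (by norm_num) |>.mp h3
    linarith
  have hM : Monotone that := monotone_nat_of_le_succ hmono
  -- boundedness above by tstar
  have hle : ∀ k, that k ≤ tstar := by
    intro k
    induction k with
    | zero => exact h0
    | succ n ih =>
      have h1 := hprox n tstar
      rw [hflat tstar le_rfl] at h1
      have hσn := hσpos n
      have h2σ : (0:ℝ) < 2 * σ n := by linarith
      have hgq := hgnn (that (n+1))
      have hdiv : (that (n+1) - that n)^2 / (2 * σ n) ≤ (tstar - that n)^2 / (2 * σ n) := by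
        linarith
      have hsq : (that (n+1) - that n)^2 ≤ (tstar - that n)^2 :=
        (div_le_div_iff_of_pos_right h2σ).mp hdiv
      nlinarith [hmono n, ih]
  have hbdd : BddAbove (Set.range that) := ⟨tstar, by rintro _ ⟨k, rfl⟩; exact hle k⟩
  have hconv : Filter.Tendsto that Filter.atTop (nhds (⨆ k, that k)) :=
    tendsto_atTop_ciSup hM hbdd
  set L := ⨆ k, that k with hLdef
  have hLle : L ≤ tstar := ciSup_le hle
  have hkL : ∀ k, that k ≤ L := fun k => le_ciSup hbdd k
  have hLt : L = tstar := by
    by_contra hne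
    have hLlt : L < tstar := lt_of_le_of_ne hLle hne
    have hgL : 0 < g L := by
      have := hstrict L tstar hLlt le_rfl
      rw [hflat tstar le_rfl] at this
      exact this
    set C := tstar - that 0 with hC
    have hC0 : (0:ℝ) ≤ C := by linarith [h0]
    -- key per-step bound
    have key : ∀ k : ℕ, ∀ ε : ℝ, 0 < ε →
        g (that (k+1)) ≤ (that (k+1) - that k) * C / σlow + ε := by
      intro k ε hε
      set p := that k
      set q := that (k+1) with hq
      set Δ := q - p with hΔdef
      set u := tstar - q with hu
      have hΔ0 : (0:ℝ) ≤ Δ := by simp [hΔdef]; exact hmono k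
      have hu0 : (0:ℝ) ≤ u := by simp [hu]; exact hle (k+1)
      have huC : u ≤ C := by
        have : that 0 ≤ q := hM (Nat.zero_le _)
        simp [hu, hC]; linarith
      have hσk : σlow ≤ σ k := hσ k
      have hσkpos : (0:ℝ) < σ k := hσpos k
      set lam := min 1 (ε * σlow / (C^2 + 1)) with hlam
      have hC1 : (0:ℝ) < C^2 + 1 := by positivity
      have hlam0 : 0 < lam := by
        apply lt_min one_pos
        positivity
      have hlam1 : lam ≤ 1 := min_le_left _ _
      -- convexity
      have hcv := hgcvx.2 (Set.mem_univ q) (Set.mem_univ tstar)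
        (by linarith : (0:ℝ) ≤ 1 - lam) hlam0.le (by ring)
      simp only [smul_eq_mul] at hcv
      rw [hflat tstar le_rfl] at hcv
      have hp := hprox k ((1 - lam) * q + lam * tstar)
      rw [← hq] at hp
      have ht : (1 - lam) * q + lam * tstar - p = Δ + lam * u := by
        simp [hΔdef, hu]; ring
      rw [ht] at hp
      have hexp : (Δ + lam * u)^2 / (2 * σ k)
          = Δ^2 / (2 * σ k) + lam * (2*Δ*u + lam*u^2) / (2 * σ k) := by
        field_simp
        ring
      rw [hexp] at hp
      -- λ g q ≤ λ (2Δu + λ u²)/(2σ)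
      have hstep : lam * g q ≤ lam * ((2*Δ*u + lam*u^2) / (2 * σ k)) := by
        rw [mul_div_assoc] at hp
        linarith
      have hgq : g q ≤ (2*Δ*u + lam*u^2) / (2 * σ k) :=
        le_of_mul_le_mul_left hstep hlam0
      -- bound RHS
      have hnum : 2*Δ*u + lam*u^2 ≤ 2*Δ*C + lam*C^2 := by
        have hu2 : u^2 ≤ C^2 := by nlinarith
        nlinarith
      have hmain : (2*Δ*u + lam*u^2) / (2 * σ k) ≤ (2*Δ*C + lam*C^2) / (2 * σlow) :=
        div_le_div₀ (by positivity) hnum (by linarith) (by linarith)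
      have hsplit : (2*Δ*C + lam*C^2) / (2 * σlow) = Δ*C/σlow + lam*C^2/(2*σlow) := by
        field_simp
      have hlamε : lam*C^2/(2*σlow) ≤ ε := by
        have h1 : lam ≤ ε * σlow / (C^2 + 1) := min_le_right _ _
        have h2 : lam * (C^2 + 1) ≤ ε * σlow := by
          rw [← le_div_iff₀ hC1]; exact h1
        have h3 : lam * C^2 ≤ ε * σlow := by
          have hx : lam * (C^2 + 1) = lam * C^2 + lam := by ring
          linarith
        rw [div_le_iff₀ (by linarith)]
        have hx2 : ε * (2 * σlow) = 2 * (ε * σlow) := by ring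
        linarith [mul_pos hε hσlow]
      calc g q ≤ (2*Δ*u + lam*u^2) / (2 * σ k) := hgq
        _ ≤ (2*Δ*C + lam*C^2) / (2 * σlow) := hmain
        _ = Δ*C/σlow + lam*C^2/(2*σlow) := hsplit
        _ ≤ Δ*C/σlow + ε := by linarith
    -- limit argument
    have hΔtend : Filter.Tendsto (fun k => (that (k+1) - that k) * C / σlow)
        Filter.atTop (nhds 0) := by
      have h1 : Filter.Tendsto (fun k => that (k+1)) Filter.atTop (nhds L) :=
        hconv.comp (Filter.tendsto_add_atTop_nat 1)
      have h2 : Filter.Tendsto (fun k => that (k+1) - that k) Filter.atTop (nhds 0) := by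
        have h3 := h1.sub hconv
        rw [sub_self] at h3
        exact h3
      have h4 := (h2.mul_const C).div_const σlow
      rw [zero_mul, zero_div] at h4
      exact h4
    have hfin : ∀ ε : ℝ, 0 < ε → g L ≤ ε := by
      intro ε hε
      have hev : ∀ᶠ k in Filter.atTop,
          (that (k+1) - that k) * C / σlow < ε/2 :=
        hΔtend.eventually_lt_const (by linarith : (0:ℝ) < ε/2)
      obtain ⟨k, hk⟩ := hev.exists
      have h2 := key k (ε/2) (by linarith)
      have h3 : g L ≤ g (that (k+1)) := hgmono _ _ (hkL (k+1))
      linarith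
    have : g L ≤ 0 := le_of_forall_pos_le_add (by intro ε hε; simpa using hfin ε hε)
    linarith
  exact ⟨hLt ▸ hconv, hM⟩
end

section
/- (Theorem 4, accumulated-error bound.) Let g : ℝ → ℝ be convex, continuous and bounded below. Let σ : ℕ → ℝ with σ k > 0, let ε : ℕ → ℝ with ε k ≥ 0, and let ς ≥ 0. Let (t̂ k) be the exact proximal sequence: t̂ 0 = t 0 and t̂ (k+1) = prox_{σ k · g}(t̂ k); and let (t k) be any sequence satisfying, for every k, |t (k+1) − prox_{σ k · g}(t k)| ≤ ε k · min 1 (|t (k+1) − t k|^ς). Then for every k, |t k − t̂ k| ≤ ∑_{i=0}^{k−1} ε i · min 1 (|t (i+1) − t i|^ς). -/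
lemma aux_limit (C D : ℝ) (hC : 0 ≤ C) (h : ∀ l : ℝ, 0 < l → l ≤ 1 → (1 - l) * C ≤ D) :
    C ≤ D := by
  have hD0 : 0 ≤ D := by have := h 1 one_pos le_rfl; linarith
  rcases eq_or_lt_of_le hC with hc | hc
  · linarith
  · by_contra hcon
    push_neg at hcon
    have hl0 : 0 < (C - D) / (2 * C) := div_pos (by linarith) (by linarith)
    have hl1 : (C - D) / (2 * C) ≤ 1 := by
      rw [div_le_one (by linarith)]; linarith
    have := h _ hl0 hl1
    have heq : (1 - (C - D) / (2 * C)) * C = (C + D) / 2 := by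
      field_simp; ring
    rw [heq] at this
    linarith

/-- Strong-minimality (scaled): if `p` minimizes `t ↦ g t + (t-x)^2/(2σ)` with `g` convex,
then for every `q`, `2σ g p + (p-x)^2 + (q-p)^2 ≤ 2σ g q + (q-x)^2`. -/
lemma aux_strong_min (g : ℝ → ℝ) (hg : ConvexOn ℝ Set.univ g)
    (σ : ℝ) (hσ : 0 < σ) (x p : ℝ)
    (hp : ∀ t, g p + (p - x)^2 / (2 * σ) ≤ g t + (t - x)^2 / (2 * σ)) (q : ℝ) :
    2 * σ * g p + (p - x)^2 + (q - p)^2 ≤ 2 * σ * g q + (q - x)^2 := by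
  have h2σ : (0:ℝ) < 2 * σ := by linarith
  have key : ∀ l : ℝ, 0 < l → l ≤ 1 →
      (1 - l) * (q - p)^2 ≤ (2 * σ * g q + (q - x)^2) - (2 * σ * g p + (p - x)^2) := by
    intro l hl0 hl1
    have hconv : g ((1 - l) * p + l * q) ≤ (1 - l) * g p + l * g q := by
      have := hg.2 (Set.mem_univ p) (Set.mem_univ q) (by linarith : (0:ℝ) ≤ 1 - l)
        (le_of_lt hl0) (by ring)
      simpa [smul_eq_mul] using this
    have hid : ((1 - l) * p + l * q - x)^2
        = (1 - l) * (p - x)^2 + l * (q - x)^2 - l * (1 - l) * (q - p)^2 := by ring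
    have hmin := hp ((1 - l) * p + l * q)
    have hmin' : 2 * σ * g p + (p - x)^2
        ≤ 2 * σ * g ((1 - l) * p + l * q) + ((1 - l) * p + l * q - x)^2 := by
      have h := mul_le_mul_of_nonneg_left hmin (le_of_lt h2σ)
      have e1 : 2 * σ * ((p - x)^2 / (2 * σ)) = (p - x)^2 := by field_simp
      have e2 : 2 * σ * (((1 - l) * p + l * q - x)^2 / (2 * σ))
          = ((1 - l) * p + l * q - x)^2 := by field_simp
      nlinarith [h]
    have hconv' : 2 * σ * g ((1 - l) * p + l * q) ≤ 2 * σ * ((1 - l) * g p + l * g q) :=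
      mul_le_mul_of_nonneg_left hconv (le_of_lt h2σ)
    rw [hid] at hmin'
    nlinarith [hmin', hconv', mul_pos hl0 hl0]
  have := aux_limit ((q - p)^2) _ (sq_nonneg _) key
  linarith

/-- Nonexpansiveness of the prox map. -/
lemma aux_nonexp (g : ℝ → ℝ) (hg : ConvexOn ℝ Set.univ g)
    (σ : ℝ) (hσ : 0 < σ) (P : ℝ → ℝ)
    (hP : ∀ (t₀ t : ℝ), g (P t₀) + (P t₀ - t₀)^2 / (2 * σ) ≤ g t + (t - t₀)^2 / (2 * σ))
    (x y : ℝ) : |P x - P y| ≤ |x - y| := by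
  set p := P x
  set q := P y
  have h1 := aux_strong_min g hg σ hσ x p (fun t => hP x t) q
  have h2 := aux_strong_min g hg σ hσ y q (fun t => hP y t) p
  have key : (q - p)^2 ≤ (q - p) * (y - x) := by nlinarith [h1, h2]
  have habs : |q - p| * |q - p| ≤ |q - p| * |y - x| := by
    calc |q - p| * |q - p| = (q - p)^2 := by
          rw [← abs_mul, abs_of_nonneg (mul_self_nonneg _), sq]
    _ ≤ (q - p) * (y - x) := key
    _ ≤ |(q - p) * (y - x)| := le_abs_self _
    _ = |q - p| * |y - x| := abs_mul _ _
  rcases eq_or_lt_of_le (abs_nonneg (q - p)) with h | h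
  · rw [abs_sub_comm p q, ← h]; exact abs_nonneg _
  · rw [abs_sub_comm p q, abs_sub_comm x y]
    exact le_of_mul_le_mul_left habs h

/-- Theorem 4, accumulated-error bound for the inexact proximal point iterations. -/
theorem stmt_12
    (g : ℝ → ℝ) (hgcvx : ConvexOn ℝ Set.univ g) (hgcont : Continuous g)
    (B : ℝ) (hgbdd : ∀ t, B ≤ g t)
    (σ : ℕ → ℝ) (hσ : ∀ k, 0 < σ k)
    (ε : ℕ → ℝ) (hε : ∀ k, 0 ≤ ε k)
    (ς : ℝ) (hς : 0 ≤ ς)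
    (prox : ℕ → ℝ → ℝ)
    (hprox : ∀ (k : ℕ) (t₀ t : ℝ),
      g (prox k t₀) + (prox k t₀ - t₀)^2 / (2 * σ k)
        ≤ g t + (t - t₀)^2 / (2 * σ k))
    (t that : ℕ → ℝ)
    (hthat0 : that 0 = t 0)
    (hthat : ∀ k : ℕ, that (k+1) = prox k (that k))
    (ht : ∀ k : ℕ, |t (k+1) - prox k (t k)| ≤ ε k * min 1 (|t (k+1) - t k| ^ ς)) :
    ∀ k : ℕ, |t k - that k| ≤ ∑ i ∈ Finset.range k, ε i * min 1 (|t (i+1) - t i| ^ ς) := by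
  intro k
  induction k with
  | zero => simp [hthat0]
  | succ k ih =>
    rw [Finset.sum_range_succ]
    have h1 : |t (k+1) - that (k+1)|
        ≤ |t (k+1) - prox k (t k)| + |prox k (t k) - prox k (that k)| := by
      rw [hthat k]
      exact abs_sub_le _ _ _
    have h2 : |prox k (t k) - prox k (that k)| ≤ |t k - that k| :=
      aux_nonexp g hgcvx (σ k) (hσ k) (prox k) (fun t₀ s => hprox k t₀ s) (t k) (that k)
    have h3 := ht k
    linarith
end

section
/- (Theorem 4, overshoot bound for the limit.) Let g : ℝ → ℝ be convex, continuous and bounded below. Let σ : ℕ → ℝ with σ k > 0, let ε : ℕ → ℝ with ε k ≥ 0 and ∑ ε k < ∞, and let ς ≥ 0. Let (t̂ k) be the exact proximal sequence t̂ 0 = t 0, t̂ (k+1) = prox_{σ k · g}(t̂ k), and assume t̂ k → t⋆ as k → ∞. Let (t k) be any sequence satisfying, for every k, |t (k+1) − prox_{σ k · g}(t k)| ≤ ε k · min 1 (|t (k+1) − t k|^ς), and set λ := ∑'_{k} ε k · min 1 (|t (k+1) − t k|^ς) (a convergent sum since ∑ ε k < ∞). If t k converges to some τ ∈ ℝ,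 then τ ≤ t⋆ + λ. -/
/-- Nonexpansiveness of the proximal operator of a convex function on ℝ. -/
lemma prox_nonexpansive (g : ℝ → ℝ) (hg : ConvexOn ℝ Set.univ g)
    (σ : ℝ) (hσ : 0 < σ) (P : ℝ → ℝ)
    (hP : ∀ t₀ t : ℝ, g (P t₀) + (P t₀ - t₀)^2 / (2 * σ) ≤ g t + (t - t₀)^2 / (2 * σ))
    (x y : ℝ) : |P x - P y| ≤ |x - y| := by
  set p := P x with hp
  set q := P y with hq
  -- key variational inequality with parameter θ
  have key : ∀ θ : ℝ, 0 < θ → θ ≤ 1 →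
      (q - p)^2 ≤ (q - p) * (y - x) + θ * (q - p)^2 := by
    intro θ hθ0 hθ1
    have h1 := hP x (p + θ * (q - p))
    have h2 := hP y (q + θ * (p - q))
    have hc1 : g (p + θ * (q - p)) ≤ (1 - θ) * g p + θ * g q := by
      have h := hg.2 (Set.mem_univ p) (Set.mem_univ q) (by linarith) hθ0.le
        (by ring : (1 - θ) + θ = 1)
      simp only [smul_eq_mul] at h
      have heq : (1 - θ) * p + θ * q = p + θ * (q - p) := by ring
      rw [heq] at h
      exact h
    have hc2 : g (q + θ * (p - q)) ≤ (1 - θ) * g q + θ * g p := by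
      have h := hg.2 (Set.mem_univ q) (Set.mem_univ p) (by linarith) hθ0.le
        (by ring : (1 - θ) + θ = 1)
      simp only [smul_eq_mul] at h
      have heq : (1 - θ) * q + θ * p = q + θ * (p - q) := by ring
      rw [heq] at h
      exact h
    have hs : 0 < 2 * σ := by linarith
    -- combine
    have e1 : θ * (g p - g q) ≤ (2*θ*(q-p)*(p-x) + θ^2*(q-p)^2) / (2*σ) := by
      have := h1.trans (by linarith [hc1] :
        g (p + θ * (q - p)) + (p + θ * (q - p) - x)^2 / (2 * σ)
          ≤ (1 - θ) * g p + θ * g q + (p + θ * (q - p) - x)^2 / (2 * σ))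
      have hexp : (p + θ * (q - p) - x)^2 = (p - x)^2 + (2*θ*(q-p)*(p-x) + θ^2*(q-p)^2) := by
        ring
      rw [hexp] at this
      rw [add_div] at this
      linarith
    have e2 : θ * (g q - g p) ≤ (2*θ*(p-q)*(q-y) + θ^2*(p-q)^2) / (2*σ) := by
      have := h2.trans (by linarith [hc2] :
        g (q + θ * (p - q)) + (q + θ * (p - q) - y)^2 / (2 * σ)
          ≤ (1 - θ) * g q + θ * g p + (q + θ * (p - q) - y)^2 / (2 * σ))
      have hexp : (q + θ * (p - q) - y)^2 = (q - y)^2 + (2*θ*(p-q)*(q-y) + θ^2*(p-q)^2) := by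
        ring
      rw [hexp] at this
      rw [add_div] at this
      linarith
    have hsum : 0 ≤ (2*θ*(q-p)*(p-x) + θ^2*(q-p)^2) / (2*σ)
        + (2*θ*(p-q)*(q-y) + θ^2*(p-q)^2) / (2*σ) := by linarith
    rw [← add_div, le_div_iff₀ hs] at hsum
    have hθσ : 0 < θ * σ := mul_pos hθ0 hσ
    nlinarith [hsum, mul_pos hθ0 hσ]
  -- pass to the limit θ → 0
  have key2 : (q - p)^2 ≤ (q - p) * (y - x) := by
    apply le_of_forall_pos_le_add
    intro ε hε
    have hC : (0:ℝ) < (q - p)^2 + 1 := by positivity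
    set θ := min 1 (ε / ((q - p)^2 + 1)) with hθdef
    have hθ0 : 0 < θ := lt_min one_pos (div_pos hε hC)
    have hθ1 : θ ≤ 1 := min_le_left _ _
    have h := key θ hθ0 hθ1
    have : θ * (q - p)^2 ≤ ε := by
      have h1 : θ ≤ ε / ((q - p)^2 + 1) := min_le_right _ _
      have h2 : θ * ((q - p)^2 + 1) ≤ ε := by
        rw [← le_div_iff₀ hC] at *
        exact h1
      nlinarith [hθ0.le]
    linarith
  -- conclude
  have habs : |q - p| * |q - p| ≤ |q - p| * |y - x| := by
    calc |q - p| * |q - p| = (q - p)^2 := by rw [← abs_mul, sq, abs_mul_self]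
    _ ≤ (q - p) * (y - x) := key2
    _ ≤ |(q - p) * (y - x)| := le_abs_self _
    _ = |q - p| * |y - x| := abs_mul _ _
  rcases eq_or_lt_of_le (abs_nonneg (q - p)) with h0 | h0
  · have : q - p = 0 := abs_eq_zero.mp h0.symm
    have : p = q := by linarith
    simp [this, abs_nonneg]
  · have := le_of_mul_le_mul_left (by linarith [habs] : |q - p| * |q - p| ≤ |q - p| * |y - x|) h0
    calc |P x - P y| = |q - p| := by rw [abs_sub_comm]
    _ ≤ |y - x| := this
    _ = |x - y| := abs_sub_comm _ _

/-- Theorem 4, overshoot bound: the limit of the inexact sequence exceeds `t⋆`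
by at most the accumulated error `λ`. -/
theorem stmt_13
    (g : ℝ → ℝ) (hgcvx : ConvexOn ℝ Set.univ g) (hgcont : Continuous g)
    (B : ℝ) (hgbdd : ∀ t, B ≤ g t)
    (σ : ℕ → ℝ) (hσ : ∀ k, 0 < σ k)
    (ε : ℕ → ℝ) (hε : ∀ k, 0 ≤ ε k) (hεsum : Summable ε)
    (ς : ℝ) (hς : 0 ≤ ς)
    (prox : ℕ → ℝ → ℝ)
    (hprox : ∀ (k : ℕ) (t₀ t : ℝ),
      g (prox k t₀) + (prox k t₀ - t₀)^2 / (2 * σ k)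
        ≤ g t + (t - t₀)^2 / (2 * σ k))
    (t that : ℕ → ℝ)
    (hthat0 : that 0 = t 0)
    (hthat : ∀ k : ℕ, that (k+1) = prox k (that k))
    (tstar : ℝ) (hthatlim : Filter.Tendsto that Filter.atTop (nhds tstar))
    (ht : ∀ k : ℕ, |t (k+1) - prox k (t k)| ≤ ε k * min 1 (|t (k+1) - t k| ^ ς))
    (lam : ℝ) (hlam : lam = ∑' k : ℕ, ε k * min 1 (|t (k+1) - t k| ^ ς))
    (τ : ℝ) (hτ : Filter.Tendsto t Filter.atTop (nhds τ)) :
    τ ≤ tstar + lam := by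
  set e : ℕ → ℝ := fun k => ε k * min 1 (|t (k+1) - t k| ^ ς) with he
  have he_nonneg : ∀ k, 0 ≤ e k := by
    intro k
    apply mul_nonneg (hε k)
    exact le_min zero_le_one (Real.rpow_nonneg (abs_nonneg _) _)
  have he_le : ∀ k, e k ≤ ε k := by
    intro k
    have : min 1 (|t (k+1) - t k| ^ ς) ≤ 1 := min_le_left _ _
    calc e k ≤ ε k * 1 := mul_le_mul_of_nonneg_left this (hε k)
    _ = ε k := mul_one _
  have hesum : Summable e := Summable.of_nonneg_of_le he_nonneg he_le hεsum
  have hpartial : ∀ n : ℕ, ∑ k ∈ Finset.range n, e k ≤ lam := by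
    intro n
    rw [hlam]
    exact Summable.sum_le_tsum (Finset.range n) (fun k _ => he_nonneg k) hesum
  have hdist : ∀ k : ℕ, |t k - that k| ≤ ∑ j ∈ Finset.range k, e j := by
    intro k
    induction k with
    | zero => simp [hthat0]
    | succ k ih =>
      have hne : |prox k (t k) - prox k (that k)| ≤ |t k - that k| :=
        prox_nonexpansive g hgcvx (σ k) (hσ k) (prox k) (hprox k) _ _
      calc |t (k+1) - that (k+1)|
          ≤ |t (k+1) - prox k (t k)| + |prox k (t k) - that (k+1)| := abs_sub_le _ _ _
        _ = |t (k+1) - prox k (t k)| + |prox k (t k) - prox k (that k)| := by rw [hthat k]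
        _ ≤ e k + |t k - that k| := add_le_add (ht k) hne
        _ ≤ e k + ∑ j ∈ Finset.range k, e j := by linarith
        _ = ∑ j ∈ Finset.range (k+1), e j := by
            rw [Finset.sum_range_succ]; ring
  have hpt : ∀ k : ℕ, t k ≤ that k + lam := by
    intro k
    have h1 : t k - that k ≤ |t k - that k| := le_abs_self _
    have h2 := (hdist k).trans (hpartial k)
    linarith
  exact le_of_tendsto_of_tendsto' hτ (hthatlim.add tendsto_const_nhds) hpt
end

section
/- (Lemma 7, quadratic growth of the value function.) Let X := {(x,s) : ∀ (x',s'), r₀(x,s) ≤ r₀(x',s')} be the (assumed nonempty) set of minimizers of r₀, let M be the minimum value of r₀, and assume t⋆ := the minimum of q over X is attained: there is (x⋆,s⋆) ∈ X with q(x⋆) = t⋆ and t⋆ ≤ q(x) for every (x,s) ∈ X. Then there exists a > 0 such that r⋆(t) ≥ a·(t − t⋆)² + M for all t ≤ t⋆. -/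
open Finset

set_option linter.unusedSectionVars false
section Farkas

variable {H : Type*} [NormedAddCommGroup H] [InnerProductSpace ℝ H] [FiniteDimensional ℝ H]
variable {ι : Type*} [Fintype ι]

local notation "⟪" x ", " y "⟫" => @inner ℝ _ _ x y

/-- The finitely generated cone over the family `a`. -/
def coneOf (a : ι → H) : Set H :=
  {x | ∃ lam : ι → ℝ, (∀ i, 0 ≤ lam i) ∧ x = ∑ i, lam i • a i}

lemma sum_subtype_eq (a : ι → H) (S : Finset ι) (mu : ι → ℝ) (h : ∀ i ∉ S, mu i = 0) :
    ∑ i : S, mu i • a i = ∑ i, mu i • a i := by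
  classical
  rw [Finset.sum_coe_sort S (fun i => mu i • a i)]
  exact Finset.sum_subset S.subset_univ (by intro i _ hi; rw [h i hi, zero_smul])

lemma coneOf_caratheodory (a : ι → H) (lam : ι → ℝ) (hlam : ∀ i, 0 ≤ lam i) :
    ∃ (S : Finset ι) (mu : ι → ℝ), (∀ i, 0 ≤ mu i) ∧ (∀ i ∉ S, mu i = 0) ∧
      LinearIndependent ℝ (fun i : S => a i) ∧
      ∑ i, mu i • a i = ∑ i, lam i • a i := by
  classical
  -- strong induction on the size of the support of `lam`
  suffices H : ∀ (N : ℕ) (lam : ι → ℝ), (∀ i, 0 ≤ lam i) →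
      (Finset.univ.filter (fun i => lam i ≠ 0)).card ≤ N →
      ∃ (S : Finset ι) (mu : ι → ℝ), (∀ i, 0 ≤ mu i) ∧ (∀ i ∉ S, mu i = 0) ∧
        LinearIndependent ℝ (fun i : S => a i) ∧
        ∑ i, mu i • a i = ∑ i, lam i • a i by
    exact H _ lam hlam le_rfl
  intro N
  induction N with
  | zero =>
    intro lam hlam hcard
    have hT : (Finset.univ.filter (fun i => lam i ≠ 0)) = ∅ :=
      Finset.card_eq_zero.mp (Nat.le_zero.mp hcard)
    have hz : ∀ i, lam i = 0 := by
      intro i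
      by_contra hne
      have : i ∈ Finset.univ.filter (fun i => lam i ≠ 0) := by simp [hne]
      simp [hT] at this
    refine ⟨∅, lam, hlam, fun i _ => hz i, ?_, rfl⟩
    have : IsEmpty ((∅ : Finset ι) : Type _) := by
      simp only [Finset.isEmpty_coe_sort]
    exact linearIndependent_empty_type
  | succ N ih =>
    intro lam hlam hcard
    set T := Finset.univ.filter (fun i => lam i ≠ 0) with hTdef
    by_cases hind : LinearIndependent ℝ (fun i : T => a i)
    · refine ⟨T, lam, hlam, ?_, hind, rfl⟩
      intro i hi
      by_contra hne
      exact hi (by simp [hTdef, hne])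
    · -- get a nontrivial vanishing combination supported on T
      obtain ⟨g, hgsum, i₁, hgi₁⟩ := Fintype.not_linearIndependent_iff.mp hind
      -- key step, assuming some positive coefficient
      have key : ∀ c : ι → ℝ, (∑ i, c i • a i = 0) → (∀ i ∉ T, c i = 0) →
          (∃ i, 0 < c i) →
          ∃ (S : Finset ι) (mu : ι → ℝ), (∀ i, 0 ≤ mu i) ∧ (∀ i ∉ S, mu i = 0) ∧
            LinearIndependent ℝ (fun i : S => a i) ∧
            ∑ i, mu i • a i = ∑ i, lam i • a i := by
        intro c hcsum hcsupp ⟨iP, hiP⟩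
        set Tc := T.filter (fun i => 0 < c i) with hTcdef
        have hiPT : iP ∈ T := by
          by_contra h
          rw [hcsupp iP h] at hiP; exact lt_irrefl 0 hiP
        have hTcne : Tc.Nonempty := ⟨iP, by simp [hTcdef, hiPT, hiP]⟩
        obtain ⟨i₀, hi₀Tc, hi₀min⟩ := Finset.exists_min_image Tc (fun i => lam i / c i) hTcne
        have hci₀ : 0 < c i₀ := (Finset.mem_filter.mp hi₀Tc).2
        have hi₀T : i₀ ∈ T := (Finset.mem_filter.mp hi₀Tc).1
        set t := lam i₀ / c i₀ with htdef
        have ht0 : 0 ≤ t := div_nonneg (hlam i₀) hci₀.le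
        set lam' := fun i => lam i - t * c i with hlam'def
        have hlam'0 : ∀ i, 0 ≤ lam' i := by
          intro i
          rcases le_or_gt (c i) 0 with hc | hc
          · have : t * c i ≤ 0 := mul_nonpos_of_nonneg_of_nonpos ht0 hc
            simp only [hlam'def]; linarith [hlam i]
          · have hiT : i ∈ T := by
              by_contra h
              rw [hcsupp i h] at hc; exact lt_irrefl 0 hc
            have hiTc : i ∈ Tc := Finset.mem_filter.mpr ⟨hiT, hc⟩
            have := hi₀min i hiTc
            have : t * c i ≤ (lam i / c i) * c i := by
              exact mul_le_mul_of_nonneg_right this hc.le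
            rw [div_mul_cancel₀ _ (ne_of_gt hc)] at this
            simp only [hlam'def]; linarith
        have hsum' : ∑ i, lam' i • a i = ∑ i, lam i • a i := by
          simp only [hlam'def, sub_smul, Finset.sum_sub_distrib, mul_smul]
          rw [← Finset.smul_sum, hcsum, smul_zero, sub_zero]
        have hsupp' : (Finset.univ.filter (fun i => lam' i ≠ 0)) ⊆ T.erase i₀ := by
          intro i hi
          simp only [Finset.mem_filter, Finset.mem_univ, true_and] at hi
          refine Finset.mem_erase.mpr ⟨?_, ?_⟩
          · rintro rfl
            apply hi
            simp only [hlam'def, htdef]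
            field_simp
            ring
          · by_contra h
            apply hi
            simp only [hlam'def, hcsupp i h]
            have : lam i = 0 := by
              by_contra h'
              exact h (by simp [hTdef, h'])
            simp [this]
        have hcard' : (Finset.univ.filter (fun i => lam' i ≠ 0)).card ≤ N := by
          have h1 := Finset.card_le_card hsupp'
          have h2 : (T.erase i₀).card = T.card - 1 := Finset.card_erase_of_mem hi₀T
          have h3 : 0 < T.card := Finset.card_pos.mpr ⟨i₀, hi₀T⟩
          omega
        obtain ⟨S, mu, h1, h2, h3, h4⟩ := ih lam' hlam'0 hcard'
        exact ⟨S, mu, h1, h2, h3, by rw [h4, hsum']⟩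
      -- extend g by zero
      set c : ι → ℝ := fun i => if h : i ∈ T then g ⟨i, h⟩ else 0 with hcdef
      have hcsum : ∑ i, c i • a i = 0 := by
        have e1 : ∑ i, c i • a i = ∑ i ∈ T, c i • a i := by
          symm
          apply Finset.sum_subset T.subset_univ
          intro i _ hi
          simp [hcdef, hi]
        rw [e1, ← Finset.sum_coe_sort T (fun i => c i • a i)]
        rw [← hgsum]
        apply Finset.sum_congr rfl
        intro i _
        simp [hcdef, i.2]
      have hcsupp : ∀ i ∉ T, c i = 0 := by intro i hi; simp [hcdef, hi]
      have hcne : c (i₁ : ι) ≠ 0 := by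
        simpa [hcdef, i₁.2] using hgi₁
      rcases lt_or_gt_of_ne hcne with hneg | hpos
      · refine key (fun i => -(c i)) ?_ (fun i hi => by simp [hcsupp i hi])
          ⟨i₁, by simpa using neg_pos.mpr hneg⟩
        simp only [neg_smul, Finset.sum_neg_distrib, hcsum, neg_zero]
      · exact key c hcsum hcsupp ⟨i₁, hpos⟩


lemma isClosed_coneOf (a : ι → H) : IsClosed (coneOf a) := by
  classical
  -- write the cone as a finite union of cones over independent subfamilies
  have hrepr : coneOf a = ⋃ S : Finset ι,
      (if LinearIndependent ℝ (fun i : S => a i) then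
        {x | ∃ mu : ι → ℝ, (∀ i, 0 ≤ mu i) ∧ (∀ i ∉ S, mu i = 0) ∧ x = ∑ i, mu i • a i}
      else ({0} : Set H)) := by
    ext x
    constructor
    · rintro ⟨lam, hlam, rfl⟩
      obtain ⟨S, mu, h1, h2, h3, h4⟩ := coneOf_caratheodory a lam hlam
      refine Set.mem_iUnion.mpr ⟨S, ?_⟩
      rw [if_pos h3]
      exact ⟨mu, h1, h2, h4.symm⟩
    · intro hx
      obtain ⟨S, hS⟩ := Set.mem_iUnion.mp hx
      by_cases h3 : LinearIndependent ℝ (fun i : S => a i)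
      · rw [if_pos h3] at hS
        obtain ⟨mu, h1, _, h4⟩ := hS
        exact ⟨mu, h1, h4⟩
      · rw [if_neg h3] at hS
        rw [Set.mem_singleton_iff.mp hS]
        exact ⟨0, fun i => le_rfl, by simp⟩
  rw [hrepr]
  apply isClosed_iUnion_of_finite
  intro S
  by_cases h3 : LinearIndependent ℝ (fun i : S => a i)
  · rw [if_pos h3]
    -- this set is the image of the closed positive orthant under a closed embedding
    set f : (S → ℝ) →ₗ[ℝ] H :=
      { toFun := fun mu => ∑ i : S, mu i • a i
        map_add' := by intro u v; simp [add_smul, Finset.sum_add_distrib]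
        map_smul' := by intro c u; simp [smul_smul, Finset.smul_sum] } with hfdef
    have hker : LinearMap.ker f = ⊥ := by
      rw [LinearMap.ker_eq_bot']
      intro mu hmu
      have := linearIndependent_iff'.mp h3 Finset.univ mu (by simpa [hfdef] using hmu)
      funext i
      exact this i (Finset.mem_univ i)
    have hemb := LinearMap.isClosedEmbedding_of_injective hker
    have himg : {x : H | ∃ mu : ι → ℝ, (∀ i, 0 ≤ mu i) ∧ (∀ i ∉ S, mu i = 0) ∧
        x = ∑ i, mu i • a i} = f '' {mu : S → ℝ | ∀ i, 0 ≤ mu i} := by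
      ext x
      constructor
      · rintro ⟨mu, h1, h2, rfl⟩
        refine ⟨fun i : S => mu i, fun i => h1 i, ?_⟩
        simp only [hfdef, LinearMap.coe_mk, AddHom.coe_mk]
        exact sum_subtype_eq a S mu h2
      · rintro ⟨mu, hmu, rfl⟩
        refine ⟨fun i => if h : i ∈ S then mu ⟨i, h⟩ else 0, ?_, ?_, ?_⟩
        · intro i
          by_cases h : i ∈ S
          · simpa [h] using hmu ⟨i, h⟩
          · simp [h]
        · intro i hi; simp [hi]
        · simp only [hfdef, LinearMap.coe_mk, AddHom.coe_mk]
          rw [← sum_subtype_eq a S _ (by intro i hi; simp [hi])]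
          apply Finset.sum_congr rfl
          intro i _
          simp [i.2]
    rw [himg]
    apply hemb.isClosedMap
    have : {mu : S → ℝ | ∀ i, 0 ≤ mu i} = ⋂ i : S, (fun mu : S → ℝ => mu i) ⁻¹' (Set.Ici 0) := by
      ext mu; simp [Set.mem_iInter]
    rw [this]
    exact isClosed_iInter fun i => (isClosed_Ici).preimage (continuous_apply i)
  · rw [if_neg h3]
    exact isClosed_singleton

/-- Farkas' lemma. -/
theorem farkas_lemma (a : ι → H) (c : H)
    (h : ∀ d : H, (∀ i, ⟪a i, d⟫ ≤ 0) → ⟪c, d⟫ ≤ 0) :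
    ∃ lam : ι → ℝ, (∀ i, 0 ≤ lam i) ∧ c = ∑ i, lam i • a i := by
  classical
  by_contra hc
  have hcnot : c ∉ coneOf a := by
    intro ⟨lam, h1, h2⟩
    exact hc ⟨lam, h1, h2⟩
  set K : ConvexCone ℝ H :=
    { carrier := coneOf a
      smul_mem' := by
        rintro t ht x ⟨lam, h1, rfl⟩
        refine ⟨fun i => t * lam i, fun i => mul_nonneg ht.le (h1 i), ?_⟩
        rw [Finset.smul_sum]
        apply Finset.sum_congr rfl
        intro i _
        rw [smul_smul]
      add_mem' := by
        rintro x ⟨lam, h1, rfl⟩ y ⟨mu, h2, rfl⟩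
        refine ⟨fun i => lam i + mu i, fun i => add_nonneg (h1 i) (h2 i), ?_⟩
        rw [← Finset.sum_add_distrib]
        apply Finset.sum_congr rfl
        intro i _
        rw [add_smul] } with hKdef
  have hKne : (K : Set H).Nonempty := ⟨0, 0, fun i => le_rfl, by simp⟩
  have hKcl : IsClosed (K : Set H) := isClosed_coneOf a
  obtain ⟨y, hy1, hy2⟩ :=
    ProperCone.hyperplane_separation'
      ({ toSubmodule := K.toPointedCone (show (0 : H) ∈ K from ⟨0, fun i => le_rfl, by simp⟩),
         isClosed' := hKcl } : ProperCone ℝ H) hcnot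
  have hmem : ∀ i, a i ∈ K := by
    intro i
    refine ⟨fun j => if j = i then 1 else 0, fun j => by positivity, ?_⟩
    simp [ite_smul]
  have hstep : ∀ i, ⟪a i, -y⟫ ≤ 0 := by
    intro i
    rw [inner_neg_right]
    simpa using hy1 (a i) (hmem i)
  have := h (-y) hstep
  rw [inner_neg_right] at this
  have h0y : 0 ≤ ⟪c, y⟫ := by linarith
  rw [real_inner_comm] at h0y
  linarith

end Farkas

open Finset

-- pointwise real lemmas
lemma aux1 (v s : ℝ) : (1/4) * (max v 0)^2 ≤ (1/2)*(v+s)^2 + (1/2)*(max (-s) 0)^2 := by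
  rcases le_or_gt v 0 with h | h
  · rw [max_eq_right h]
    nlinarith [sq_nonneg (v+s), sq_nonneg (max (-s) 0)]
  · rw [max_eq_left h.le]
    rcases le_or_gt (-s) 0 with h2 | h2
    · rw [max_eq_right h2]; nlinarith
    · rw [max_eq_left h2.le]; nlinarith [sq_nonneg (v + 2*s)]

lemma aux2 (a h : ℝ) : (max (a+h) 0)^2 ≤ (max a 0 + h)^2 := by
  rcases le_or_gt (a+h) 0 with h1 | h1
  · rw [max_eq_right h1]
    nlinarith [sq_nonneg (max a 0 + h)]
  · rw [max_eq_left h1.le]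
    rcases le_or_gt a 0 with h2 | h2
    · rw [max_eq_right h2]
      nlinarith [mul_nonneg (neg_nonneg.mpr h2) (by linarith : (0:ℝ) ≤ a + 2*h)]
    · rw [max_eq_left h2.le]

lemma aux3 (y w : ℝ) (hw : 0 ≤ w) : (max (y - w) 0)^2 ≤ (max y 0 - w)^2 := by
  rcases le_or_gt (y - w) 0 with h1 | h1
  · rw [max_eq_right h1]
    nlinarith [sq_nonneg (max y 0 - w)]
  · rw [max_eq_left h1.le]
    rw [max_eq_left (by linarith : (0:ℝ) ≤ y)]

lemma aux4 (v : ℝ) :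
    (1/2)*(v + (-v + max v 0/2))^2 + (1/2)*(max (-(-v + max v 0/2)) 0)^2
      = (1/4)*(max v 0)^2 := by
  rcases le_or_gt v 0 with h | h
  · rw [max_eq_right h]
    simp only [zero_div, add_zero, neg_neg]
    rw [max_eq_right h]
    ring
  · rw [max_eq_left h.le]
    have : -(-v + v/2) = v/2 := by ring
    rw [this, max_eq_left (by linarith : (0:ℝ) ≤ v/2)]
    ring

lemma euclid_norm_sq {m : ℕ} (u : EuclideanSpace ℝ (Fin m)) : ‖u‖^2 = ∑ j, (u j)^2 := by
  rw [EuclideanSpace.norm_eq, Real.sq_sqrt (by positivity)]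
  simp [Real.norm_eq_abs, sq_abs]

lemma infDist_orthant {m : ℕ} (s : EuclideanSpace ℝ (Fin m)) :
    (Metric.infDist s {s' : EuclideanSpace ℝ (Fin m) | ∀ i, 0 ≤ s' i})^2
      = ∑ j, (max (-(s j)) 0)^2 := by
  set C : Set (EuclideanSpace ℝ (Fin m)) := {s' | ∀ i, 0 ≤ s' i} with hC
  set spos : EuclideanSpace ℝ (Fin m) := WithLp.toLp 2 (fun j => max (s j) 0) with hspos
  have hCne : C.Nonempty := ⟨spos, fun i => le_max_right _ _⟩
  have hkey : Metric.infDist s C = Real.sqrt (∑ j, (max (-(s j)) 0)^2) := by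
    apply le_antisymm
    · have hmem : spos ∈ C := fun i => le_max_right _ _
      refine le_trans (Metric.infDist_le_dist_of_mem hmem) ?_
      rw [dist_eq_norm]
      rw [show ‖s - spos‖ = Real.sqrt (‖s - spos‖^2) by
        rw [Real.sqrt_sq (norm_nonneg _)]]
      apply Real.sqrt_le_sqrt
      rw [euclid_norm_sq]
      apply le_of_eq
      apply Finset.sum_congr rfl
      intro j _
      have : (s - spos) j = s j - max (s j) 0 := by
        simp [hspos, PiLp.sub_apply]
      rw [this]
      rcases le_or_gt (s j) 0 with h | h
      · rw [max_eq_right h, max_eq_left (by linarith)]; ring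
      · rw [max_eq_left h.le, max_eq_right (by linarith)]; ring
    · rw [← not_lt]
      intro hlt
      obtain ⟨y, hy, hlt'⟩ := (Metric.infDist_lt_iff hCne).mp hlt
      rw [← not_le] at hlt'
      apply hlt'
      rw [dist_eq_norm]
      rw [show ‖s - y‖ = Real.sqrt (‖s - y‖^2) by rw [Real.sqrt_sq (norm_nonneg _)]]
      apply Real.sqrt_le_sqrt
      rw [euclid_norm_sq]
      apply Finset.sum_le_sum
      intro j _
      have hyj : 0 ≤ y j := hy j
      have : (s - y) j = s j - y j := by simp [PiLp.sub_apply]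
      rw [this]
      rcases le_or_gt (s j) 0 with h | h
      · rw [max_eq_left (by linarith)]; nlinarith
      · rw [max_eq_right (by linarith)]
        nlinarith [sq_nonneg (s j - y j)]
  rw [hkey, Real.sq_sqrt (by positivity)]
lemma aux5 (T S : ℝ) (hS : 0 ≤ S) (h : ∀ ε : ℝ, 0 ≤ 2*ε*T + ε^2*S) : T = 0 := by
  have key : ∀ T' : ℝ, (∀ ε : ℝ, 0 < ε → 0 ≤ 2*ε*T' + ε^2*S) → 0 ≤ T' := by
    intro T' h'
    rcases eq_or_lt_of_le hS with hS0 | hS0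
    · have := h' 1 one_pos
      rw [← hS0] at this
      linarith
    · by_contra hT
      push_neg at hT
      have hε : 0 < -T'/S := div_pos (by linarith) hS0
      have := h' (-T'/S) hε
      have hSne : S ≠ 0 := ne_of_gt hS0
      have he : 2*(-T'/S)*T' + (-T'/S)^2 * S = -(T'^2/S) := by
        field_simp
        ring
      rw [he] at this
      have hTne : T' ≠ 0 := ne_of_lt hT
      have hTsq : 0 < T'^2 := by positivity
      have := div_pos hTsq hS0
      linarith
  have h1 : 0 ≤ T := key T (fun ε _ => h ε)
  have h2 : 0 ≤ -T := by
    apply key (-T)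
    intro ε hε
    have := h (-ε)
    nlinarith
  linarith
set_option maxHeartbeats 1600000 in
/-- Lemma 7, quadratic growth of the value function:
`r⋆(t) ≥ a(t − t⋆)² + M` for all `t ≤ t⋆`, for some `a > 0`. -/
theorem stmt_15
    (n m : ℕ)
    (Q : EuclideanSpace ℝ (Fin n) →ₗ[ℝ] EuclideanSpace ℝ (Fin n))
    (hQsymm : ∀ x y : EuclideanSpace ℝ (Fin n), (inner ℝ (Q x) y : ℝ) = inner ℝ x (Q y))
    (hQpsd : ∀ x : EuclideanSpace ℝ (Fin n), 0 ≤ (inner ℝ x (Q x) : ℝ))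
    (p : EuclideanSpace ℝ (Fin n))
    (q : EuclideanSpace ℝ (Fin n) → ℝ)
    (hq : ∀ x, q x = (1/2) * (inner ℝ x (Q x) : ℝ) + (inner ℝ p x : ℝ))
    (C : Set (EuclideanSpace ℝ (Fin m)))
    (hC : C = {s : EuclideanSpace ℝ (Fin m) | ∀ i, 0 ≤ s i})
    (A : EuclideanSpace ℝ (Fin n) →ₗ[ℝ] EuclideanSpace ℝ (Fin m))
    (b : EuclideanSpace ℝ (Fin m))
    (r₀ : EuclideanSpace ℝ (Fin n) → EuclideanSpace ℝ (Fin m) → ℝ)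
    (hr₀ : ∀ x s, r₀ x s =
      (1/2) * ‖A x + s - b‖^2 + (1/2) * (Metric.infDist s C)^2)
    (r : EuclideanSpace ℝ (Fin n) → EuclideanSpace ℝ (Fin m) → ℝ → ℝ)
    (hr : ∀ x s t, r x s t = (1/2) * (max (q x - t) 0)^2 + r₀ x s)
    (rstar : ℝ → ℝ)
    (hrstar : ∀ t, rstar t =
      ⨅ z : EuclideanSpace ℝ (Fin n) × EuclideanSpace ℝ (Fin m), r z.1 z.2 t)
    (X : Set (EuclideanSpace ℝ (Fin n) × EuclideanSpace ℝ (Fin m)))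
    (hX : X = {z | ∀ (x' : EuclideanSpace ℝ (Fin n)) (s' : EuclideanSpace ℝ (Fin m)),
      r₀ z.1 z.2 ≤ r₀ x' s'})
    (hXne : X.Nonempty)
    (tstar : ℝ)
    (xstar : EuclideanSpace ℝ (Fin n)) (sstar : EuclideanSpace ℝ (Fin m))
    (hxstar : (xstar, sstar) ∈ X) (hqstar : q xstar = tstar)
    (hopt : ∀ z ∈ X, tstar ≤ q z.1)
    (M : ℝ) (hM : M = r₀ xstar sstar) :
    ∃ a : ℝ, 0 < a ∧ ∀ t : ℝ, t ≤ tstar → a * (t - tstar)^2 + M ≤ rstar t := by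
  classical
  -- coordinate description of the data
  set Y : EuclideanSpace ℝ (Fin n) → Fin m → ℝ := fun x j => A x j - b j with hY
  set G : EuclideanSpace ℝ (Fin n) → ℝ := fun x => (1/4) * ∑ j, (max (Y x j) 0)^2 with hG
  have hr₀' : ∀ x s, r₀ x s
      = (1/2) * ∑ j, (Y x j + s j)^2 + (1/2) * ∑ j, (max (-(s j)) 0)^2 := by
    intro x s
    have h1 : ‖A x + s - b‖^2 = ∑ j, (Y x j + s j)^2 := by
      rw [euclid_norm_sq]
      apply Finset.sum_congr rfl
      intro j _
      have : (A x + s - b) j = Y x j + s j := by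
        simp only [PiLp.add_apply, PiLp.sub_apply, hY]
        ring
      rw [this]
    rw [hr₀, hC, infDist_orthant, h1]
  -- Step A : G is a lower bound for r₀
  have hGle : ∀ x s, G x ≤ r₀ x s := by
    intro x s
    rw [hr₀', hG]
    calc (1/4) * ∑ j, (max (Y x j) 0)^2 = ∑ j, (1/4) * (max (Y x j) 0)^2 := by
          rw [Finset.mul_sum]
      _ ≤ ∑ j, ((1/2)*(Y x j + s j)^2 + (1/2)*(max (-(s j)) 0)^2) :=
          Finset.sum_le_sum (fun j _ => aux1 (Y x j) (s j))
      _ = (1/2) * ∑ j, (Y x j + s j)^2 + (1/2) * ∑ j, (max (-(s j)) 0)^2 := by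
          rw [Finset.sum_add_distrib, Finset.mul_sum, Finset.mul_sum]
  -- Step B : the optimal slack for a given x
  set sp : EuclideanSpace ℝ (Fin n) → EuclideanSpace ℝ (Fin m) :=
    fun x => (WithLp.toLp 2 (fun j => -(Y x j) + max (Y x j) 0 / 2) : EuclideanSpace ℝ (Fin m)) with hsp
  have hGsp : ∀ x, r₀ x (sp x) = G x := by
    intro x
    rw [hr₀', hG]
    have hcoord : ∀ j, sp x j = -(Y x j) + max (Y x j) 0 / 2 := fun j => rfl
    calc (1/2) * ∑ j, (Y x j + sp x j)^2 + (1/2) * ∑ j, (max (-(sp x j)) 0)^2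
        = ∑ j, ((1/2)*(Y x j + sp x j)^2 + (1/2)*(max (-(sp x j)) 0)^2) := by
          rw [Finset.sum_add_distrib, Finset.mul_sum, Finset.mul_sum]
      _ = ∑ j, (1/4) * (max (Y x j) 0)^2 := by
          apply Finset.sum_congr rfl
          intro j _
          rw [hcoord j]
          exact aux4 (Y x j)
      _ = (1/4) * ∑ j, (max (Y x j) 0)^2 := by rw [Finset.mul_sum]
  -- Step C : M is the minimum of G
  have hXdef := hX ▸ hxstar
  have hMle : ∀ x, M ≤ G x := by
    intro x
    rw [hM]
    calc r₀ xstar sstar ≤ r₀ x (sp x) := hXdef x (sp x)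
      _ = G x := hGsp x
  have hMG : G xstar = M := by
    refine le_antisymm ?_ (hMle xstar)
    rw [hM]
    exact hGle xstar sstar
  have hMr : ∀ x s, M ≤ r₀ x s := fun x s => (hMle x).trans (hGle x s)
  -- Step D : optimality of xstar for G in coordinates
  set v : Fin m → ℝ := Y xstar with hv
  set w : Fin m → ℝ := fun j => max (v j) 0 with hw
  have hw0 : ∀ j, 0 ≤ w j := fun j => le_max_right _ _
  have hvw : ∀ j, v j ≤ w j := fun j => le_max_left _ _
  have h4M : ∑ j, (w j)^2 = 4 * M := by
    have h1 : G xstar = (1/4) * ∑ j, (w j)^2 := by rw [hG]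
    rw [hMG] at h1
    linarith
  have hYsmul : ∀ (ε : ℝ) d j, Y (xstar + ε • d) j = v j + ε * (A d) j := by
    intro ε d j
    simp only [hY, hv, map_add, map_smul, PiLp.add_apply, PiLp.smul_apply, smul_eq_mul]
    ring
  have hAtW : ∀ d, ∑ j, w j * (A d) j = 0 := by
    intro d
    set T := ∑ j, w j * (A d) j with hT
    set S := ∑ j, ((A d) j)^2 with hS
    have hS0 : 0 ≤ S := Finset.sum_nonneg fun j _ => sq_nonneg _
    apply aux5 T S hS0
    intro ε
    have h1 : M ≤ G (xstar + ε • d) := hMle _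
    have h2 : G (xstar + ε • d) ≤ (1/4)*(∑ j, (w j)^2 + (2*ε*T + ε^2*S)) := by
      rw [hG]
      have hper : ∀ j, (max (Y (xstar + ε • d) j) 0)^2
          ≤ (w j)^2 + (2*ε*(w j * (A d) j) + ε^2*((A d) j)^2) := by
        intro j
        rw [hYsmul]
        calc (max (v j + ε * (A d) j) 0)^2 ≤ (max (v j) 0 + ε * (A d) j)^2 :=
              aux2 (v j) (ε * (A d) j)
          _ = (w j)^2 + (2*ε*(w j * (A d) j) + ε^2*((A d) j)^2) := by
              rw [hw]; ring
      calc (1/4) * ∑ j, (max (Y (xstar + ε • d) j) 0)^2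
          ≤ (1/4) * ∑ j, ((w j)^2 + (2*ε*(w j * (A d) j) + ε^2*((A d) j)^2)) := by
            have := Finset.sum_le_sum (fun j (_ : j ∈ Finset.univ) => hper j)
            linarith
        _ = (1/4)*(∑ j, (w j)^2 + (2*ε*T + ε^2*S)) := by
            have e1 : ∑ j, ((w j)^2 + (2*ε*(w j * (A d) j) + ε^2*((A d) j)^2))
                = ∑ j, (w j)^2 + (2*ε*T + ε^2*S) := by
              rw [hT, hS, Finset.mul_sum, Finset.mul_sum, Finset.sum_add_distrib,
                Finset.sum_add_distrib]
            rw [e1]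
    have := h4M
    linarith
  -- Step E : quadratic error bound for G
  have hwv : ∑ j, w j * v j = ∑ j, (w j)^2 := by
    apply Finset.sum_congr rfl
    intro j _
    simp only [hw]
    rcases le_or_gt (v j) 0 with h | h
    · simp [max_eq_right h]
    · rw [max_eq_left h.le]; ring
  have hwY : ∀ x, ∑ j, w j * Y x j = ∑ j, (w j)^2 := by
    intro x
    have h1 := hAtW (x - xstar)
    have h2 : ∀ j, (A (x - xstar)) j = Y x j - v j := by
      intro j
      simp only [hY, hv, map_sub, PiLp.sub_apply]
      ring
    have h3 : ∑ j, w j * (Y x j - v j) = 0 := by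
      rw [← h1]
      exact Finset.sum_congr rfl (fun j _ => by rw [h2 j])
    have h4 : ∑ j, w j * (Y x j - v j) = ∑ j, w j * Y x j - ∑ j, w j * v j := by
      rw [← Finset.sum_sub_distrib]
      exact Finset.sum_congr rfl (fun j _ => by ring)
    rw [h4] at h3
    linarith [hwv]
  have herr : ∀ x, ∑ j, (max (Y x j) 0 - w j)^2 ≤ 4*(G x - M) := by
    intro x
    have hexp : ∑ j, (max (Y x j) 0 - w j)^2
        = ∑ j, (max (Y x j) 0)^2 - 2*∑ j, (w j * max (Y x j) 0) + ∑ j, (w j)^2 := by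
      have e : ∀ j, (max (Y x j) 0 - w j)^2
          = ((max (Y x j) 0)^2 + (w j)^2) - 2*(w j * max (Y x j) 0) := by intro j; ring
      rw [Finset.sum_congr rfl (fun j _ => e j), Finset.sum_sub_distrib,
        Finset.sum_add_distrib, ← Finset.mul_sum]
      ring
    have hmono : ∑ j, (w j)^2 ≤ ∑ j, w j * max (Y x j) 0 := by
      rw [← hwY x]
      exact Finset.sum_le_sum fun j _ =>
        mul_le_mul_of_nonneg_left (le_max_left _ _) (hw0 j)
    have h4G : ∑ j, (max (Y x j) 0)^2 = 4 * G x := by rw [hG]; ring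
    linarith [h4M]
  -- Step F : feasible points are above tstar
  have hfeas : ∀ x, (∀ j, Y x j ≤ w j) → tstar ≤ q x := by
    intro x hx
    have hGx : G x ≤ M := by
      rw [hG]
      have : ∑ j, (max (Y x j) 0)^2 ≤ ∑ j, (w j)^2 := by
        apply Finset.sum_le_sum
        intro j _
        exact pow_le_pow_left₀ (le_max_right _ _) (max_le (hx j) (hw0 j)) 2
      linarith [h4M]
    have hGxM : G x = M := le_antisymm hGx (hMle x)
    have hmem : (x, sp x) ∈ X := by
      rw [hX]
      intro x' s'
      show r₀ x (sp x) ≤ r₀ x' s'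
      rw [hGsp x, hGxM]
      exact hMr x' s'
    exact hopt _ hmem
  -- Step G : expansion of q around xstar
  have hqexp : ∀ d, q (xstar + d)
      = tstar + (inner ℝ (Q xstar + p) d : ℝ) + (1/2) * (inner ℝ d (Q d) : ℝ) := by
    intro d
    rw [hq]
    have h1 : (inner ℝ (xstar + d) (Q (xstar + d)) : ℝ)
        = (inner ℝ xstar (Q xstar) : ℝ) + 2*(inner ℝ (Q xstar) d : ℝ) + (inner ℝ d (Q d) : ℝ) := by
      rw [map_add, inner_add_left, inner_add_right, inner_add_right]
      have e1 : (inner ℝ xstar (Q d) : ℝ) = (inner ℝ (Q xstar) d : ℝ) := (hQsymm xstar d).symm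
      have e2 : (inner ℝ d (Q xstar) : ℝ) = (inner ℝ (Q xstar) d : ℝ) := real_inner_comm _ _
      rw [e1, e2]
      ring
    rw [h1, inner_add_right, inner_add_left, ← hqstar, hq]
    ring
  -- Step H : KKT via Farkas' lemma
  set g : EuclideanSpace ℝ (Fin n) := Q xstar + p with hg
  haveI : DecidablePred (fun j : Fin m => v j = w j) := fun j => Classical.dec _
  set aJ : {j : Fin m // v j = w j} → EuclideanSpace ℝ (Fin n) :=
    fun j => (LinearMap.adjoint A) (EuclideanSpace.single j.1 1) with haJ
  have haJd : ∀ (j : {j : Fin m // v j = w j}) d, (inner ℝ (aJ j) d : ℝ) = (A d) j.1 := by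
    intro j d
    simp only [haJ]
    rw [LinearMap.adjoint_inner_left, EuclideanSpace.inner_single_left]
    simp
  have hKKT : ∀ d, (∀ j : {j : Fin m // v j = w j}, (inner ℝ (aJ j) d : ℝ) ≤ 0) →
      (inner ℝ (-g) d : ℝ) ≤ 0 := by
    intro d hd
    have hAd : ∀ j : Fin m, v j = w j → (A d) j ≤ 0 := fun j hj => by
      have := hd ⟨j, hj⟩
      rwa [haJd] at this
    set eb : Fin m → ℝ :=
      fun j => if v j = w j ∨ (A d) j ≤ 0 then 1 else (w j - v j)/((A d) j) with heb
    have heb0 : ∀ j, 0 < eb j := by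
      intro j
      simp only [heb]
      by_cases hj : v j = w j ∨ (A d) j ≤ 0
      · rw [if_pos hj]; norm_num
      · rw [if_neg hj]
        push_neg at hj
        exact div_pos (by linarith [lt_of_le_of_ne (hvw j) hj.1]) (by linarith [hj.2])
    have hfeaseps : ∀ ε, 0 < ε → (∀ j, ε ≤ eb j) → tstar ≤ q (xstar + ε • d) := by
      intro ε hε hεb
      apply hfeas
      intro j
      rw [hYsmul]
      by_cases hj : v j = w j ∨ (A d) j ≤ 0
      · have hAdj : (A d) j ≤ 0 := by
          rcases hj with hj | hj
          · exact hAd j hj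
          · exact hj
        have : ε * (A d) j ≤ 0 := mul_nonpos_of_nonneg_of_nonpos hε.le hAdj
        linarith [hvw j]
      · push_neg at hj
        have hAdj : 0 < (A d) j := hj.2
        have hεle : ε ≤ (w j - v j)/((A d) j) := by
          have h5 := hεb j
          simp only [heb] at h5
          rwa [if_neg (by push_neg; exact hj)] at h5
        have : ε * (A d) j ≤ ((w j - v j)/((A d) j)) * (A d) j :=
          mul_le_mul_of_nonneg_right hεle hAdj.le
        rw [div_mul_cancel₀ _ (ne_of_gt hAdj)] at this
        linarith
    have hexeps : ∃ ε₀, 0 < ε₀ ∧ ∀ j, ε₀ ≤ eb j := by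
      rcases isEmpty_or_nonempty (Fin m) with hm | hm
      · exact ⟨1, one_pos, fun j => (hm.elim j)⟩
      · refine ⟨min 1 (Finset.univ.inf' Finset.univ_nonempty eb), ?_, ?_⟩
        · apply lt_min one_pos
          rw [Finset.lt_inf'_iff]
          exact fun j _ => heb0 j
        · intro j
          exact le_trans (min_le_right _ _) (Finset.inf'_le _ (Finset.mem_univ j))
    obtain ⟨ε₀, hε₀, hε₀b⟩ := hexeps
    set c : ℝ := (inner ℝ d (Q d) : ℝ) with hc
    have hc0 : 0 ≤ c := hQpsd d
    have hsmall : ∀ ε, 0 < ε → ε ≤ ε₀ → 0 ≤ (inner ℝ g d : ℝ) + (ε/2) * c := by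
      intro ε hε hεle
      have h1 := hfeaseps ε hε (fun j => le_trans hεle (hε₀b j))
      rw [hqexp (ε • d)] at h1
      have e1 : (inner ℝ (Q xstar + p) (ε • d) : ℝ) = ε * (inner ℝ g d : ℝ) := by
        rw [hg, real_inner_smul_right]
      have e2 : (inner ℝ (ε • d) (Q (ε • d)) : ℝ) = ε^2 * c := by
        rw [map_smul, real_inner_smul_left, real_inner_smul_right, hc]
        ring
      rw [e1, e2] at h1
      have h2 : 0 ≤ ε * ((inner ℝ g d : ℝ) + (ε/2) * c) := by nlinarith
      exact nonneg_of_mul_nonneg_right h2 hε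
    have hgd : 0 ≤ (inner ℝ g d : ℝ) := by
      by_contra hlt
      push_neg at hlt
      set ε := min ε₀ ((-(inner ℝ g d : ℝ))/(c+1)) with hε
      have hεpos : 0 < ε := lt_min hε₀ (div_pos (by linarith) (by linarith))
      have h := hsmall ε hεpos (min_le_left _ _)
      have h2 : ε ≤ (-(inner ℝ g d : ℝ))/(c+1) := min_le_right _ _
      have h3 : ε * (c+1) ≤ -(inner ℝ g d : ℝ) := by
        rw [← le_div_iff₀ (by linarith : (0:ℝ) < c+1)]
        exact h2
      nlinarith
    rw [inner_neg_left]
    linarith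
  obtain ⟨lam, hlam0, hlamsum⟩ := farkas_lemma aJ (-g) hKKT
  -- Step J : the key error bound
  set Λ : ℝ := ∑ j : {j : Fin m // v j = w j}, (lam j)^2 with hΛ
  have hΛ0 : 0 ≤ Λ := Finset.sum_nonneg fun j _ => sq_nonneg _
  have hB : ∀ x s, (max (tstar - q x) 0)^2 ≤ (4*Λ) * (r₀ x s - M) := by
    intro x s
    set d : EuclideanSpace ℝ (Fin n) := x - xstar with hd
    have hx : xstar + d = x := by rw [hd]; abel
    have hq1 : tstar - q x ≤ (inner ℝ (-g) d : ℝ) := by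
      have h1 := hqexp d
      rw [hx] at h1
      have hpsd := hQpsd d
      rw [inner_neg_left]
      linarith
    have hAdj : ∀ j : {j : Fin m // v j = w j}, (A d) j.1 = Y x j.1 - w j.1 := by
      intro j
      have h1 : (A d) j.1 = Y x j.1 - v j.1 := by
        simp only [hd, hY, hv, map_sub, PiLp.sub_apply]
        ring
      rw [h1, j.2]
    have hsum : (inner ℝ (-g) d : ℝ)
        = ∑ j : {j : Fin m // v j = w j}, lam j * (Y x j.1 - w j.1) := by
      rw [hlamsum, sum_inner]
      apply Finset.sum_congr rfl
      intro j _
      rw [real_inner_smul_left, haJd, hAdj]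
    set E : ℝ := ∑ j : {j : Fin m // v j = w j}, lam j * (max (Y x j.1 - w j.1) 0) with hE
    have hE0 : 0 ≤ E :=
      Finset.sum_nonneg fun j _ => mul_nonneg (hlam0 j) (le_max_right _ _)
    have hlt : tstar - q x ≤ E := by
      refine le_trans hq1 ?_
      rw [hsum, hE]
      exact Finset.sum_le_sum fun j _ =>
        mul_le_mul_of_nonneg_left (le_max_left _ _) (hlam0 j)
    have hmax : max (tstar - q x) 0 ≤ E := max_le hlt hE0
    have hsq : (max (tstar - q x) 0)^2 ≤ E^2 :=
      pow_le_pow_left₀ (le_max_right _ _) hmax 2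
    have hCS : E^2 ≤ Λ * ∑ j : {j : Fin m // v j = w j}, (max (Y x j.1 - w j.1) 0)^2 := by
      have := Finset.sum_mul_sq_le_sq_mul_sq Finset.univ lam
        (fun j : {j : Fin m // v j = w j} => max (Y x j.1 - w j.1) 0)
      simpa [hE, hΛ] using this
    have hsub : ∑ j : {j : Fin m // v j = w j}, (max (Y x j.1 - w j.1) 0)^2
        ≤ ∑ j : Fin m, (max (Y x j - w j) 0)^2 := by
      rw [← Finset.sum_subtype (Finset.univ.filter (fun j : Fin m => v j = w j))
        (by simp) (fun j : Fin m => (max (Y x j - w j) 0)^2)]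
      exact Finset.sum_le_sum_of_subset_of_nonneg (Finset.filter_subset _ _)
        (fun j _ _ => sq_nonneg _)
    have hptw : ∑ j : Fin m, (max (Y x j - w j) 0)^2 ≤ ∑ j, (max (Y x j) 0 - w j)^2 :=
      Finset.sum_le_sum fun j _ => aux3 (Y x j) (w j) (hw0 j)
    have h4 := herr x
    have hfin : G x - M ≤ r₀ x s - M := by linarith [hGle x s]
    calc (max (tstar - q x) 0)^2 ≤ E^2 := hsq
      _ ≤ Λ * ∑ j : {j : Fin m // v j = w j}, (max (Y x j.1 - w j.1) 0)^2 := hCS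
      _ ≤ Λ * (4*(r₀ x s - M)) := by
          apply mul_le_mul_of_nonneg_left _ hΛ0
          calc ∑ j : {j : Fin m // v j = w j}, (max (Y x j.1 - w j.1) 0)^2
              ≤ ∑ j : Fin m, (max (Y x j - w j) 0)^2 := hsub
            _ ≤ ∑ j, (max (Y x j) 0 - w j)^2 := hptw
            _ ≤ 4*(G x - M) := h4
            _ ≤ 4*(r₀ x s - M) := by linarith
      _ = (4*Λ) * (r₀ x s - M) := by ring
  -- Step K : conclusion
  refine ⟨min (1/8) (1/(4*(4*Λ+1))), lt_min (by norm_num) (one_div_pos.mpr (by linarith)), ?_⟩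
  intro t ht
  rw [hrstar]
  apply le_ciInf
  intro z
  rw [hr]
  have hsqt : (t - tstar)^2 = (tstar - t)^2 := by ring
  rw [hsqt]
  set D : ℝ := tstar - t with hD
  have hD0 : 0 ≤ D := by rw [hD]; linarith
  have hmin8 : min (1/8) (1/(4*(4*Λ+1))) ≤ 1/8 := min_le_left _ _
  have hminl : min (1/8) (1/(4*(4*Λ+1))) ≤ 1/(4*(4*Λ+1)) := min_le_right _ _
  have hr0M : 0 ≤ r₀ z.1 z.2 - M := by linarith [hMr z.1 z.2]
  rcases le_or_gt (D/2) (q z.1 - t) with hcase | hcase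
  · have h1 : D/2 ≤ max (q z.1 - t) 0 := le_trans hcase (le_max_left _ _)
    have h2 : (D/2)^2 ≤ (max (q z.1 - t) 0)^2 :=
      pow_le_pow_left₀ (by linarith : (0:ℝ) ≤ D/2) h1 2
    have h3 : min (1/8) (1/(4*(4*Λ+1))) * D^2 ≤ (1/8) * D^2 :=
      mul_le_mul_of_nonneg_right hmin8 (sq_nonneg D)
    linarith [hMr z.1 z.2]
  · have h1 : D/2 ≤ tstar - q z.1 := by
      have h1' := hcase
      rw [hD] at h1' ⊢
      linarith
    have h2 : (D/2)^2 ≤ (max (tstar - q z.1) 0)^2 :=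
      pow_le_pow_left₀ (by linarith : (0:ℝ) ≤ D/2) (le_trans h1 (le_max_left _ _)) 2
    have h3 := hB z.1 z.2
    have h4 : (D/2)^2 ≤ (4*Λ+1)*(r₀ z.1 z.2 - M) := by nlinarith [h2, h3, hr0M]
    have h5 : (0:ℝ) < 4*Λ+1 := by linarith
    have h6 : min (1/8) (1/(4*(4*Λ+1))) * D^2 ≤ (1/(4*(4*Λ+1))) * D^2 :=
      mul_le_mul_of_nonneg_right hminl (sq_nonneg D)
    have h7 : (1/(4*(4*Λ+1))) * D^2 ≤ r₀ z.1 z.2 - M := by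
      rw [div_mul_eq_mul_div, one_mul, div_le_iff₀ (by linarith : (0:ℝ) < 4*(4*Λ+1))]
      nlinarith [h4]
    have h8 : 0 ≤ (1/2) * (max (q z.1 - t) 0)^2 := by positivity
    linarith
end
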